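/- arXiv:1501.02517 — 3 statements merged into one kernel-verified Lean document; each statement's English description precedes it below -/
import Mathlib

section
/- Let P be a d-polytope, y a vertex of P incident to exactly m facets with m > d (a nonsimple vertex of excess m - d), and let F be a facet of P not containing y. In the wedge W of P over F, the two images y_b and y_t of y are joined by an edge whose affine hull is the intersection of the m vertical facets of W corresponding to the facets of P through y; in particular this vertical edge is a 1-dimensional nonsimplicity of the (d+1)-polytope W of excess m - d. -/
-- key lemma: extreme point is determined by its active constraints
theorem key_vertex {d : ℕ} {ι : Type*} [Fintype ι]
    (A : ι → ((Fin d → ℝ) →ᵃ[ℝ] ℝ))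
    (P : Set (Fin d → ℝ)) (hP : P = {v | ∀ i : ι, 0 ≤ A i v})
    (y : Fin d → ℝ) (hy : y ∈ Set.extremePoints ℝ P)
    (v : Fin d → ℝ) (hv : ∀ i, A i y = 0 → A i v = 0) : v = y := by
  have hyP : y ∈ P := hy.1
  have hyA : ∀ i, 0 ≤ A i y := by rw [hP] at hyP; exact hyP
  by_contra hne
  have hAff : ∀ (i : ι) (w : Fin d → ℝ) (ε : ℝ),
      A i (y + ε • w) = A i y + ε * ((A i).linear w) := by
    intro i w ε
    have h1 : y + ε • w = ε • w +ᵥ y := by rw [add_comm]; rfl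
    rw [h1, AffineMap.map_vadd, map_smul, smul_eq_mul, vadd_eq_add, add_comm]
  have hev : ∀ (w : Fin d → ℝ), (∀ i, A i y = 0 → (A i).linear w = 0) →
      ∀ᶠ ε : ℝ in nhds 0, (y + ε • w) ∈ P := by
    intro w hw
    rw [hP]
    simp only [Set.mem_setOf_eq]
    rw [Filter.eventually_all]
    intro i
    rcases eq_or_lt_of_le (hyA i) with h | h
    · filter_upwards with ε
      rw [hAff, hw i h.symm, mul_zero, add_zero]
      exact hyA i
    · have hc : Continuous fun ε : ℝ => A i (y + ε • w) := by
        simp only [hAff]; continuity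
      have h0 : (fun ε : ℝ => A i (y + ε • w)) 0 = A i y := by simp
      have hmem : Set.Ioi (0:ℝ) ∈ nhds ((fun ε : ℝ => A i (y + ε • w)) 0) := by
        rw [h0]; exact Ioi_mem_nhds h
      have := (hc.tendsto (0:ℝ)).eventually_mem hmem
      filter_upwards [this] with ε hε using le_of_lt hε
  set u := v - y with hu
  have hlin : ∀ i, A i y = 0 → (A i).linear u = 0 := by
    intro i h
    have h2 := (A i).linearMap_vsub v y
    simpa [hv i h, h, hu, -map_sub] using h2
  have hlin' : ∀ i, A i y = 0 → (A i).linear (-u) = 0 := by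
    intro i h; rw [map_neg, hlin i h, neg_zero]
  have hcomb := ((hev u hlin).and (hev (-u) hlin')).filter_mono
    (nhdsWithin_le_nhds (s := Set.Ioi (0:ℝ)))
  obtain ⟨ε, hε⟩ := (hcomb.and self_mem_nhdsWithin).exists
  obtain ⟨⟨h1, h2⟩, hεpos⟩ := hε
  have hmid : y ∈ openSegment ℝ (y + ε • u) (y + ε • (-u)) := by
    refine ⟨1/2, 1/2, by norm_num, by norm_num, by norm_num, ?_⟩
    module
  obtain ⟨he1, -⟩ := (mem_extremePoints.1 hy).2 _ h1 _ h2 hmid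
  have hz : ε • u = 0 := add_eq_left.mp he1
  rcases smul_eq_zero.mp hz with h | h
  · exact absurd h (ne_of_gt hεpos)
  · exact hne (by rwa [hu, sub_eq_zero] at h)

/-- Nonsimple vertices generate nonsimple vertical edges under wedging.  Let
`P = {v | ∀ i, 0 ≤ A i v}` be a `d`-polytope, `y` a vertex of `P` incident to
exactly `m > d` facets, and `i₀` the index of a facet not containing `y`.  In
the wedge `W` of `P` over the facet `i₀`, the two images
`y_b = (y, -(A i₀ y)/C)` and `y_t = (y, (A i₀ y)/C)` of `y` are joined by an
edge of `W` whose affine hull is the intersection of the `m` vertical facets of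
`W` corresponding to the facets of `P` through `y`; this vertical edge is a
`1`-dimensional nonsimplicity of the `(d+1)`-polytope `W` of excess `m - d`. -/
theorem wedge_nonsimple_vertex_gives_nonsimple_edge
    {d : ℕ} {ι : Type*} [Fintype ι]
    (A : ι → ((Fin d → ℝ) →ᵃ[ℝ] ℝ))
    (P : Set (Fin d → ℝ)) (hP : P = {v | ∀ i : ι, 0 ≤ A i v})
    (hPcomp : IsCompact P)
    (y : Fin d → ℝ) (hy : y ∈ Set.extremePoints ℝ P)
    (m : ℕ) (hm : Nat.card {i : ι // A i y = 0} = m) (hmd : d < m)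
    (i₀ : ι) (hi₀ : 0 < A i₀ y)
    (C : ℝ) (hC : 0 < C)
    (W : Set ((Fin d → ℝ) × ℝ))
    (hW : W = {p : (Fin d → ℝ) × ℝ | (∀ i : ι, i ≠ i₀ → 0 ≤ A i p.1) ∧
      0 ≤ A i₀ p.1 + C * p.2 ∧ 0 ≤ A i₀ p.1 - C * p.2}) :
    IsExtreme ℝ W (segment ℝ (y, -(A i₀ y / C)) (y, A i₀ y / C)) ∧
    (affineSpan ℝ {((y, -(A i₀ y / C)) : (Fin d → ℝ) × ℝ), (y, A i₀ y / C)} : Set ((Fin d → ℝ) × ℝ))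
      = ⋂ i ∈ {i : ι | A i y = 0}, {p : (Fin d → ℝ) × ℝ | A i p.1 = 0} ∧
    -- the excess of this 1-dimensional nonsimplicity of the (d+1)-polytope `W`
    m - ((d + 1) - 1) = m - d := by
  have hyP : y ∈ P := hy.1
  have hyA : ∀ i, 0 ≤ A i y := by rw [hP] at hyP; exact hyP
  set t : ℝ := A i₀ y / C with ht_def
  have ht : 0 < t := div_pos hi₀ hC
  have hCt : C * t = A i₀ y := by rw [ht_def]; field_simp
  clear_value t
  -- membership in the segment from a bound on the scalar coordinate
  have hseg : ∀ s : ℝ, -t ≤ s → s ≤ t →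
      ((y, s) : (Fin d → ℝ) × ℝ) ∈ segment ℝ (y, -t) (y, t) := by
    intro s hs1 hs2
    refine ⟨(t - s)/(2*t), (t + s)/(2*t),
      div_nonneg (by linarith) (by linarith),
      div_nonneg (by linarith) (by linarith), by field_simp; ring, ?_⟩
    simp only [Prod.smul_mk, Prod.mk_add_mk, smul_eq_mul, Prod.mk.injEq]
    constructor
    · rw [← add_smul]
      have : (t - s)/(2*t) + (t + s)/(2*t) = 1 := by field_simp; ring
      rw [this, one_smul]
    · field_simp; ring
  refine ⟨⟨?_, ?_⟩, ?_, by omega⟩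
  · -- segment ⊆ W
    rintro p ⟨a, b, ha, hb, hab, rfl⟩
    rw [hW]
    simp only [Prod.smul_mk, Prod.mk_add_mk, smul_eq_mul, Set.mem_setOf_eq]
    have hy1 : a • y + b • y = y := by rw [← add_smul, hab, one_smul]
    refine ⟨fun i _ => by rw [hy1]; exact hyA i, ?_, ?_⟩ <;> · rw [hy1]; nlinarith
  · -- extremality
    rintro x₁ hx₁ x₂ hx₂ x hxseg hxopen
    obtain ⟨a, b, ha, hb, hab, hx⟩ := hxopen
    rw [hW] at hx₁ hx₂
    obtain ⟨h₁P, h₁p, h₁m⟩ := hx₁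
    obtain ⟨h₂P, h₂p, h₂m⟩ := hx₂
    have hx1 : x.1 = y := by
      obtain ⟨a', b', _, _, hab', h⟩ := hxseg
      rw [← h]
      simp only [Prod.smul_mk, Prod.mk_add_mk]
      rw [← add_smul, hab', one_smul]
    have hvP : ∀ z : (Fin d → ℝ) × ℝ, (∀ i : ι, i ≠ i₀ → 0 ≤ A i z.1) →
        0 ≤ A i₀ z.1 + C * z.2 → 0 ≤ A i₀ z.1 - C * z.2 → z.1 ∈ P := by
      intro z hz1 hz2 hz3
      rw [hP]
      intro i
      by_cases hi : i = i₀
      · subst hi; linarith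
      · exact hz1 i hi
    have hyop : y ∈ openSegment ℝ x₁.1 x₂.1 := by
      refine ⟨a, b, ha, hb, hab, ?_⟩
      rw [← hx1, ← hx]; rfl
    obtain ⟨e₁, e₂⟩ := (mem_extremePoints.1 hy).2 _ (hvP x₁ h₁P h₁p h₁m) _ (hvP x₂ h₂P h₂p h₂m) hyop
    have hbound : ∀ z : (Fin d → ℝ) × ℝ, z.1 = y →
        0 ≤ A i₀ z.1 + C * z.2 → 0 ≤ A i₀ z.1 - C * z.2 →
        z ∈ segment ℝ ((y, -t) : (Fin d → ℝ) × ℝ) (y, t) := by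
      intro z hz hz2 hz3
      rw [hz] at hz2 hz3
      have h1 : -t ≤ z.2 := by rw [← hCt] at hz2; nlinarith
      have h2 : z.2 ≤ t := by rw [← hCt] at hz3; nlinarith
      have : z = (y, z.2) := by rw [← hz]
      rw [this]
      exact hseg z.2 h1 h2
    exact hbound x₁ e₁ h₁p h₁m
  · -- affine span equality
    ext p
    simp only [Set.mem_iInter, Set.mem_setOf_eq, SetLike.mem_coe]
    constructor
    · intro hp i hi
      have hd : p -ᵥ ((y, -t) : (Fin d → ℝ) × ℝ) ∈
          (affineSpan ℝ {((y, -t) : (Fin d → ℝ) × ℝ), (y, t)}).direction :=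
        AffineSubspace.vsub_mem_direction hp (left_mem_affineSpan_pair ℝ _ _)
      rw [direction_affineSpan, mem_vectorSpan_pair_rev] at hd
      obtain ⟨r, hr⟩ := hd
      have hp1 : p.1 = y := by
        have h := congrArg Prod.fst hr
        simp only [Prod.smul_fst, Prod.fst_vsub] at h
        have h2 : p.1 -ᵥ y = 0 := by simpa [vsub_eq_sub] using h.symm
        exact vsub_eq_zero_iff_eq.mp h2
      rw [hp1]; exact hi
    · intro hp
      have hp1 : p.1 = y := key_vertex A P hP y hy p.1 hp
      have : ((p.2 + t)/(2*t)) • (((y, t) : (Fin d → ℝ) × ℝ) -ᵥ (y, -t)) = p -ᵥ (y, -t) := by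
        apply Prod.ext
        · simp [vsub_eq_sub, hp1]
        · simp only [Prod.smul_snd, Prod.snd_vsub, vsub_eq_sub, smul_eq_mul]
          simp only [Prod.snd_sub]
          rw [sub_neg_eq_add, sub_neg_eq_add, show t + t = 2*t by ring,
            div_mul_cancel₀ _ (by positivity : (2*t) ≠ 0)]
      have := vadd_left_mem_affineSpan_pair.2 ⟨(p.2 + t)/(2*t), this⟩
      simpa using this
end

section
/- Perturbing a boundary facet does not reduce a nonsimplicity: let Q be a d-polytope with a k-dimensional nonsimplicity, i.e., a k-face S whose affine hull is the intersection of m > d - k facets (the space-supporting facets), and let B be a facet incident to S that is not among the m space-supporting facets (a boundary facet of S). Then any sufficiently small perturbation of B alone yields a polytope that still has a k-dimensional nonsimplicity supported by the same m facets; in particular the excess m - (d-k) is unchanged. -/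
set_option maxHeartbeats 1000000 in


/-- Perturbing a boundary facet does not reduce a nonsimplicity.  Let
`Q = {v | ∀ i, 0 ≤ A i v}` be a `d`-polytope with a `k`-face `S` whose affine
hull is the intersection of the `m > d - k` facet hyperplanes indexed by `M`
(the space-supporting facets), and let `b ∉ M` be a boundary facet incident to
`S`.  Then any sufficiently small perturbation of `b` alone yields a polytope
that still has a `k`-dimensional nonsimplicity supported by the same `m`
facets; in particular the excess `m - (d - k)` is unchanged. -/
theorem perturb_boundary_facet_preserves_nonsimplicity
    {d : ℕ} {ι : Type*} [Fintype ι] [DecidableEq ι]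
    (A : ι → ((Fin d → ℝ) →ᵃ[ℝ] ℝ))
    (Q : Set (Fin d → ℝ)) (hQ : Q = {v | ∀ i : ι, 0 ≤ A i v})
    (hQcomp : IsCompact Q)
    (k m : ℕ) (M : Finset ι) (hM : M.card = m) (hmk : d - k < m)
    (S : Set (Fin d → ℝ)) (hSface : IsExtreme ℝ Q S) (hSne : S.Nonempty)
    (hSdim : Module.finrank ℝ (affineSpan ℝ S).direction = k)
    (hSspan : (affineSpan ℝ S : Set (Fin d → ℝ)) = ⋂ i ∈ M, {v | A i v = 0})
    (b : ι) (hb : b ∉ M)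
    -- `b` is a boundary facet of `S`: it meets `S` but does not contain it
    (hbS : (∃ v ∈ S, A b v = 0) ∧ ∃ v ∈ S, A b v ≠ 0)
    (g : (Fin d → ℝ) →ᵃ[ℝ] ℝ) :
    ∃ ε₀ > (0 : ℝ), ∀ t : ℝ, |t| < ε₀ →
      ∃ S' : Set (Fin d → ℝ),
        IsExtreme ℝ {v | ∀ i : ι, 0 ≤ (if i = b then A b + t • g else A i) v} S' ∧
        S'.Nonempty ∧
        Module.finrank ℝ (affineSpan ℝ S').direction = k ∧
        (affineSpan ℝ S' : Set (Fin d → ℝ)) = ⋂ i ∈ M, {v | A i v = 0} := by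
  obtain ⟨-, w, hwS, hwb⟩ := hbS
  have hSQ : S ⊆ Q := hSface.1
  have hwQ : ∀ i : ι, 0 ≤ A i w := by
    have := hSQ hwS; rw [hQ] at this; exact this
  have hAbw : 0 < A b w := lt_of_le_of_ne (hwQ b) (Ne.symm hwb)
  -- every point of `S` is tight on all constraints in `M`
  have hM0 : ∀ x ∈ S, ∀ i ∈ M, A i x = 0 := by
    intro x hx i hi
    have hx' : x ∈ (affineSpan ℝ S : Set (Fin d → ℝ)) := subset_affineSpan ℝ S hx
    rw [hSspan] at hx'
    simp only [Set.mem_iInter, Set.mem_setOf_eq] at hx'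
    exact hx' i hi
  refine ⟨A b w / (|g w| + 1), by positivity, ?_⟩
  intro t ht
  set A' : ι → ((Fin d → ℝ) →ᵃ[ℝ] ℝ) := fun i => if i = b then A b + t • g else A i with hA'
  have hA'ne : ∀ i, i ≠ b → A' i = A i := by intro i hi; simp [hA', hi]
  have hA'b : ∀ v, A' b v = A b v + t * g v := by intro v; simp [hA']
  have he : 0 < A b w + t * g w := by
    have h1 : |t| * (|g w| + 1) < A b w := by
      have hpos : (0:ℝ) < |g w| + 1 := by positivity
      calc |t| * (|g w| + 1) < A b w / (|g w| + 1) * (|g w| + 1) := by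
            exact mul_lt_mul_of_pos_right ht hpos
        _ = A b w := by field_simp
    have h2 : |t * g w| ≤ |t| * (|g w| + 1) := by
      rw [abs_mul]
      have := abs_nonneg t
      nlinarith [abs_nonneg (g w)]
    have := neg_abs_le (t * g w)
    linarith
  set S' : Set (Fin d → ℝ) :=
    {v | (∀ i : ι, 0 ≤ A' i v) ∧ ∀ i ∈ M, A i v = 0} with hS'
  have hwS' : w ∈ S' := by
    refine ⟨fun i => ?_, fun i hi => hM0 w hwS i hi⟩
    by_cases hib : i = b
    · subst hib; rw [hA'b]; linarith
    · rw [hA'ne i hib]; exact hwQ i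
  -- extremeness
  have hext : IsExtreme ℝ {v | ∀ i : ι, 0 ≤ A' i v} S' := by
    constructor
    · intro v hv; exact hv.1
    · rintro x hx y hy z ⟨hz1, hz2⟩ hseg
      obtain ⟨a, c, ha, hc, hac, hz⟩ := hseg
      have key : ∀ i ∈ M, A i x = 0 ∧ A i y = 0 := by
        intro i hi
        have hib : i ≠ b := fun h => hb (h ▸ hi)
        have hxi : 0 ≤ A i x := by have := hx i; rwa [hA'ne i hib] at this
        have hyi : 0 ≤ A i y := by have := hy i; rwa [hA'ne i hib] at this
        have hzi : A i z = 0 := hz2 i hi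
        have hcombo : A i z = a * A i x + c * A i y := by
          rw [← hz, Convex.combo_affine_apply hac]; simp
        constructor <;> nlinarith
      exact ⟨hx, fun i hi => (key i hi).1⟩
  -- every point of S lies in the affine span of S'
  have hkey : ∀ x ∈ S, x ∈ affineSpan ℝ S' := by
    intro x hx
    have hxQ : ∀ i : ι, 0 ≤ A i x := by
      have := hSQ hx; rw [hQ] at this; exact this
    set e : ℝ := A b w + t * g w with he_def
    set cc : ℝ := A b x + t * g x with hcc_def
    set c' : ℝ := min cc 0 with hc'_def
    have hc'0 : c' ≤ 0 := min_le_right _ _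
    have hc'c : c' ≤ cc := min_le_left _ _
    have hec' : 0 < e - c' := by simp only [hc'_def]; cases' le_total cc 0 with h h <;>
      simp [min_eq_left, min_eq_right, h] <;> linarith
    set θ : ℝ := -c' / (e - c') with hθ_def
    have hθ0 : 0 ≤ θ := by apply div_nonneg <;> linarith
    have hθ1 : θ < 1 := by
      rw [hθ_def, div_lt_one hec']; linarith
    set xθ : Fin d → ℝ := AffineMap.lineMap x w θ with hxθ_def
    have happ : ∀ f : (Fin d → ℝ) →ᵃ[ℝ] ℝ, f xθ = (1 - θ) * f x + θ * f w := by
      intro f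
      rw [hxθ_def, AffineMap.apply_lineMap, AffineMap.lineMap_apply]
      simp only [vsub_eq_sub, vadd_eq_add, smul_eq_mul]; ring
    have hxθS' : xθ ∈ S' := by
      constructor
      · intro i
        by_cases hib : i = b
        · rw [hib]
          have h1 : A' b xθ = (1 - θ) * cc + θ * e := by
            rw [hA'b, happ (A b), happ g, hcc_def, he_def]; ring
          have h2 : (1 - θ) * c' + θ * e = 0 := by
            rw [hθ_def]; field_simp; ring
          rw [h1]
          nlinarith
        · rw [hA'ne i hib, happ (A i)]
          nlinarith [hxQ i, hwQ i]
      · intro i hi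
        rw [happ (A i), hM0 x hx i hi, hM0 w hwS i hi]; ring
    -- x is on the line through w and xθ
    have h1θ : (1 : ℝ) - θ ≠ 0 := by linarith
    have hx_eq : x = (1 - θ)⁻¹ • (xθ -ᵥ w) +ᵥ w := by
      rw [hxθ_def, AffineMap.lineMap_apply]
      simp only [vsub_eq_sub, vadd_eq_add]
      funext j
      simp only [Pi.add_apply, Pi.smul_apply, Pi.sub_apply, smul_eq_mul]
      field_simp
      ring
    rw [hx_eq]
    exact AffineSubspace.smul_vsub_vadd_mem _ _ (subset_affineSpan ℝ S' hxθS')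
      (subset_affineSpan ℝ S' hwS') (subset_affineSpan ℝ S' hwS')
  have hle1 : affineSpan ℝ S ≤ affineSpan ℝ S' := by
    rw [affineSpan_le]; exact fun x hx => hkey x hx
  have hle2 : affineSpan ℝ S' ≤ affineSpan ℝ S := by
    rw [affineSpan_le]
    intro v hv
    show v ∈ (affineSpan ℝ S : Set (Fin d → ℝ))
    rw [hSspan]
    simp only [Set.mem_iInter, Set.mem_setOf_eq]
    exact fun i hi => hv.2 i hi
  have hspans : affineSpan ℝ S' = affineSpan ℝ S := le_antisymm hle2 hle1
  exact ⟨S', hext, ⟨w, hwS'⟩, by rw [hspans]; exact hSdim, by rw [hspans]; exact hSspan⟩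
end

section
/- The 5-dimensional polytope P_5 defined by the 25 explicit inequalities H^T(P_5) v ≥ 0 of Santos–Weibel (listed in the appendix, embedded in the flat {1} × ℝ^5) is a spindle with apexes x and y: the vertex x satisfies the first 12 inequalities with equality and the last 13 strictly, the vertex y satisfies the last 13 with equality and the first 12 strictly, and every facet of P_5 contains x or y. -/
noncomputable def santosWeibelH : Fin 25 → Fin 6 → ℝ :=
  ![![1, 100, 0, 0, 21, -7],
    ![1, 100, 0, 0, 16, -15],
    ![1, 100, 0, 0, 0, -32],
    ![1, 100, 0, 0, -16, -15],
    ![1, 100, 0, 0, -21, -7],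
    ![1, 100, 0, 0, -20, -4],
    ![1, 100, 0, 0, 0, 32],
    ![1, 100, 0, 0, 20, -4],
    ![1, 100, 3/100, -1/50, 0, -30],
    ![1, 100, -3/100, -1/50, 0, 30],
    ![1, 100, -3/2000, 7/2000, 0, 318/10],
    ![1, 100, 3/2000, 7/2000, 0, -318/10],
    ![1, -100, 30, 0, 0, 0],
    ![1, -100, 4, -15, 0, 0],
    ![1, -100, 0, -33/2, 0, 0],
    ![1, -100, -1, -16, 0, 0],
    ![1, -100, -55/2, 0, 0, 0],
    ![1, -100, -17, 18, 0, 0],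
    ![1, -100, 0, 38, 0, 0],
    ![1, -100, 22, 17, 0, 0],
    ![1, -100, -10, 0, 1/5, -1/5],
    ![1, -100, 2999/100, 0, -3/25, -1/5],
    ![1, -100, 299999/10000, 0, 0, 1/100],
    ![1, -100, -2745/100, 0, 1/5000, 1/800],
    ![1, -100, -27, 0, 1/500, -1/80]]

noncomputable def santosWeibelP : Set (Fin 6 → ℝ) :=
  {v | v 0 = 1 ∧ ∀ i : Fin 25, 0 ≤ ∑ j : Fin 6, santosWeibelH i j * v j}

@[simp] lemma sw_cons_val_five {α : Type*} {m : ℕ} (x : α) (u : Fin (m + 5) → α) :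
    Matrix.vecCons x u 5 =
      Matrix.vecHead (Matrix.vecTail (Matrix.vecTail (Matrix.vecTail (Matrix.vecTail u)))) :=
  rfl

noncomputable def swX : Fin 6 → ℝ := ![1, -1/100, 0, 0, 0, 0]
noncomputable def swY : Fin 6 → ℝ := ![1, 1/100, 0, 0, 0, 0]

lemma swRow0 : santosWeibelH 0 = ![1, 100, 0, 0, 21, -7] := rfl
lemma swRow1 : santosWeibelH 1 = ![1, 100, 0, 0, 16, -15] := rfl
lemma swRow2 : santosWeibelH 2 = ![1, 100, 0, 0, 0, -32] := rfl
lemma swRow3 : santosWeibelH 3 = ![1, 100, 0, 0, -16, -15] := rfl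
lemma swRow4 : santosWeibelH 4 = ![1, 100, 0, 0, -21, -7] := rfl
lemma swRow5 : santosWeibelH 5 = ![1, 100, 0, 0, -20, -4] := rfl
lemma swRow6 : santosWeibelH 6 = ![1, 100, 0, 0, 0, 32] := rfl
lemma swRow7 : santosWeibelH 7 = ![1, 100, 0, 0, 20, -4] := rfl
lemma swRow8 : santosWeibelH 8 = ![1, 100, 3/100, -1/50, 0, -30] := rfl
lemma swRow9 : santosWeibelH 9 = ![1, 100, -3/100, -1/50, 0, 30] := rfl
lemma swRow10 : santosWeibelH 10 = ![1, 100, -3/2000, 7/2000, 0, 318/10] := rfl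
lemma swRow11 : santosWeibelH 11 = ![1, 100, 3/2000, 7/2000, 0, -318/10] := rfl
lemma swRow12 : santosWeibelH 12 = ![1, -100, 30, 0, 0, 0] := rfl
lemma swRow13 : santosWeibelH 13 = ![1, -100, 4, -15, 0, 0] := rfl
lemma swRow14 : santosWeibelH 14 = ![1, -100, 0, -33/2, 0, 0] := rfl
lemma swRow15 : santosWeibelH 15 = ![1, -100, -1, -16, 0, 0] := rfl
lemma swRow16 : santosWeibelH 16 = ![1, -100, -55/2, 0, 0, 0] := rfl
lemma swRow17 : santosWeibelH 17 = ![1, -100, -17, 18, 0, 0] := rfl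
lemma swRow18 : santosWeibelH 18 = ![1, -100, 0, 38, 0, 0] := rfl
lemma swRow19 : santosWeibelH 19 = ![1, -100, 22, 17, 0, 0] := rfl
lemma swRow20 : santosWeibelH 20 = ![1, -100, -10, 0, 1/5, -1/5] := rfl
lemma swRow21 : santosWeibelH 21 = ![1, -100, 2999/100, 0, -3/25, -1/5] := rfl
lemma swRow22 : santosWeibelH 22 = ![1, -100, 299999/10000, 0, 0, 1/100] := rfl
lemma swRow23 : santosWeibelH 23 = ![1, -100, -2745/100, 0, 1/5000, 1/800] := rfl
lemma swRow24 : santosWeibelH 24 = ![1, -100, -27, 0, 1/500, -1/80] := rfl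

lemma swX_vals (i : Fin 25) : ∑ j : Fin 6, santosWeibelH i j * swX j
    = if (i : ℕ) < 12 then 0 else 2 := by
  fin_cases i <;>
    simp [swRow0, swRow1, swRow2, swRow3, swRow4, swRow5, swRow6, swRow7, swRow8, swRow9, swRow10, swRow11, swRow12, swRow13, swRow14, swRow15, swRow16, swRow17, swRow18, swRow19, swRow20, swRow21, swRow22, swRow23, swRow24, swX, Fin.sum_univ_six] <;> norm_num

lemma swY_vals (i : Fin 25) : ∑ j : Fin 6, santosWeibelH i j * swY j
    = if (i : ℕ) < 12 then 2 else 0 := by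
  fin_cases i <;>
    simp [swRow0, swRow1, swRow2, swRow3, swRow4, swRow5, swRow6, swRow7, swRow8, swRow9, swRow10, swRow11, swRow12, swRow13, swRow14, swRow15, swRow16, swRow17, swRow18, swRow19, swRow20, swRow21, swRow22, swRow23, swRow24, swY, Fin.sum_univ_six] <;> norm_num

lemma swX_mem : swX ∈ santosWeibelP := by
  refine ⟨rfl, fun i => ?_⟩
  rw [swX_vals i]; split_ifs <;> norm_num

lemma swY_mem : swY ∈ santosWeibelP := by
  refine ⟨rfl, fun i => ?_⟩
  rw [swY_vals i]; split_ifs <;> norm_num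

lemma sw_eqX (v : Fin 6 → ℝ) (h0 : v 0 = 1)
    (hE : ∀ i : Fin 25, (i : ℕ) < 12 → ∑ j : Fin 6, santosWeibelH i j * v j = 0) :
    v = swX := by
  have e0 := hE 0 (by decide)
  have e2 := hE 2 (by decide)
  have e4 := hE 4 (by decide)
  have e6 := hE 6 (by decide)
  have e8 := hE 8 (by decide)
  have e9 := hE 9 (by decide)
  have e10 := hE 10 (by decide)
  rw [swRow0, Fin.sum_univ_six] at e0
  rw [swRow2, Fin.sum_univ_six] at e2
  rw [swRow4, Fin.sum_univ_six] at e4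
  rw [swRow6, Fin.sum_univ_six] at e6
  rw [swRow8, Fin.sum_univ_six] at e8
  rw [swRow9, Fin.sum_univ_six] at e9
  rw [swRow10, Fin.sum_univ_six] at e10
  simp only [Matrix.cons_val_zero, Matrix.cons_val_one, Matrix.head_cons, Matrix.cons_val_two,
    Matrix.cons_val_three, Matrix.cons_val_four, sw_cons_val_five, Matrix.vecHead,
    Matrix.vecTail] at e0 e2 e4 e6 e8 e9 e10
  norm_num [Matrix.cons_val_succ', Fin.succ] at e0 e2 e4 e6 e8 e9 e10
  funext j
  fin_cases j <;> simp [swX] <;> linarith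

lemma sw_eqY (v : Fin 6 → ℝ) (h0 : v 0 = 1)
    (hE : ∀ i : Fin 25, 12 ≤ (i : ℕ) → ∑ j : Fin 6, santosWeibelH i j * v j = 0) :
    v = swY := by
  have e12 := hE 12 (by decide)
  have e14 := hE 14 (by decide)
  have e16 := hE 16 (by decide)
  have e18 := hE 18 (by decide)
  have e20 := hE 20 (by decide)
  have e22 := hE 22 (by decide)
  rw [swRow12, Fin.sum_univ_six] at e12
  rw [swRow14, Fin.sum_univ_six] at e14
  rw [swRow16, Fin.sum_univ_six] at e16
  rw [swRow18, Fin.sum_univ_six] at e18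
  rw [swRow20, Fin.sum_univ_six] at e20
  rw [swRow22, Fin.sum_univ_six] at e22
  simp only [Matrix.cons_val_zero, Matrix.cons_val_one, Matrix.head_cons, Matrix.cons_val_two,
    Matrix.cons_val_three, Matrix.cons_val_four, sw_cons_val_five, Matrix.vecHead,
    Matrix.vecTail] at e12 e14 e16 e18 e20 e22
  norm_num [Matrix.cons_val_succ', Fin.succ] at e12 e14 e16 e18 e20 e22
  funext j
  fin_cases j <;> simp [swY] <;> linarith

lemma sw_split {a b s t : ℝ} (ha : 0 < a) (hb : 0 < b) (hs : 0 ≤ s) (ht : 0 ≤ t)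
    (h : a * s + b * t = 0) : s = 0 ∧ t = 0 := by
  constructor <;> nlinarith

lemma sw_key {a b : ℝ} {x₁ x₂ z : Fin 6 → ℝ} (hx : a • x₁ + b • x₂ = z) (i : Fin 25) :
    a * (∑ j : Fin 6, santosWeibelH i j * x₁ j) + b * (∑ j : Fin 6, santosWeibelH i j * x₂ j)
      = ∑ j : Fin 6, santosWeibelH i j * z j := by
  have cj : ∀ j : Fin 6, a * x₁ j + b * x₂ j = z j := by
    intro j; rw [← hx]; simp
  simp only [Fin.sum_univ_six]
  linear_combination santosWeibelH i 0 * cj 0 + santosWeibelH i 1 * cj 1 +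
    santosWeibelH i 2 * cj 2 + santosWeibelH i 3 * cj 3 + santosWeibelH i 4 * cj 4 +
    santosWeibelH i 5 * cj 5

lemma swX_extreme : swX ∈ Set.extremePoints ℝ santosWeibelP := by
  refine ⟨swX_mem, fun x₁ h₁ x₂ h₂ hseg => ?_⟩
  obtain ⟨a, b, ha, hb, hab, hx⟩ := hseg
  have hz : ∀ i : Fin 25, (i : ℕ) < 12 →
      (∑ j : Fin 6, santosWeibelH i j * x₁ j = 0) ∧
      (∑ j : Fin 6, santosWeibelH i j * x₂ j = 0) := by
    intro i hi
    have hk := sw_key hx i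
    rw [swX_vals i, if_pos hi] at hk
    exact sw_split ha hb (h₁.2 i) (h₂.2 i) hk
  exact sw_eqX x₁ h₁.1 (fun i hi => (hz i hi).1)

lemma swY_extreme : swY ∈ Set.extremePoints ℝ santosWeibelP := by
  refine ⟨swY_mem, fun x₁ h₁ x₂ h₂ hseg => ?_⟩
  obtain ⟨a, b, ha, hb, hab, hx⟩ := hseg
  have hz : ∀ i : Fin 25, 12 ≤ (i : ℕ) →
      (∑ j : Fin 6, santosWeibelH i j * x₁ j = 0) ∧
      (∑ j : Fin 6, santosWeibelH i j * x₂ j = 0) := by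
    intro i hi
    have hk := sw_key hx i
    rw [swY_vals i, if_neg (by omega)] at hk
    exact sw_split ha hb (h₁.2 i) (h₂.2 i) hk
  exact sw_eqY x₁ h₁.1 (fun i hi => (hz i hi).1)

/-- The 5-dimensional polytope `P₅` defined by the 25 explicit inequalities of
Santos–Weibel is a spindle with apexes `x` and `y`: the vertex `x` satisfies
the first 12 inequalities with equality and the last 13 strictly, the vertex
`y` satisfies the last 13 with equality and the first 12 strictly, and every
facet of `P₅` contains `x` or `y`. -/
theorem santosWeibelP_is_spindle :
    ∃ x y : Fin 6 → ℝ,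
      x ∈ Set.extremePoints ℝ santosWeibelP ∧
      y ∈ Set.extremePoints ℝ santosWeibelP ∧
      (∀ i : Fin 25, (i : ℕ) < 12 → ∑ j : Fin 6, santosWeibelH i j * x j = 0) ∧
      (∀ i : Fin 25, 12 ≤ (i : ℕ) → 0 < ∑ j : Fin 6, santosWeibelH i j * x j) ∧
      (∀ i : Fin 25, 12 ≤ (i : ℕ) → ∑ j : Fin 6, santosWeibelH i j * y j = 0) ∧
      (∀ i : Fin 25, (i : ℕ) < 12 → 0 < ∑ j : Fin 6, santosWeibelH i j * y j) ∧
      (∀ i : Fin 25, (∑ j : Fin 6, santosWeibelH i j * x j = 0) ∨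
        (∑ j : Fin 6, santosWeibelH i j * y j = 0)) := by
  refine ⟨swX, swY, swX_extreme, swY_extreme, ?_, ?_, ?_, ?_, ?_⟩
  · intro i hi; rw [swX_vals i, if_pos hi]
  · intro i hi; rw [swX_vals i, if_neg (by omega)]; norm_num
  · intro i hi; rw [swY_vals i, if_neg (by omega)]
  · intro i hi; rw [swY_vals i, if_pos hi]; norm_num
  · intro i
    rcases lt_or_ge (i : ℕ) 12 with hi | hi
    · exact Or.inl (by rw [swX_vals i, if_pos hi])
    · exact Or.inr (by rw [swY_vals i, if_neg (by omega)])
end
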